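/- arXiv:2405.13609 — 2 statements merged into one kernel-verified Lean document; each statement's English description precedes it below -/
import Mathlib

section
/- Let r₀, ..., r_{T-1} be real numbers and define h₀ = 0 and h_{t+1} = max(0, h_t - r_t) for 0 ≤ t < T. Then ∑_{t=0}^{T-1} max(0, r_t - h_t) = max over k ∈ {-1, 0, ..., T-1} of ∑_{i=0}^{k} r_i, where the empty sum (k = -1) is 0. -/
/-- Telescoping identity for the maximum-prefix-sum objective: with
`h₀ = 0`, `h_{t+1} = max 0 (h_t - r t)`, the adapted rewards `max 0 (r_t - h_t)`
sum to the maximum over `k ∈ {-1,0,...,T-1}` of the prefix sums `∑_{i=0}^k r_i`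
(a prefix of length `n` corresponds to `k = n - 1`; `n = 0` is the empty prefix). -/
theorem max_prefix_sum_telescoping (T : ℕ) (r h : ℕ → ℝ) (h0 : h 0 = 0)
    (hrec : ∀ t, h (t + 1) = max 0 (h t - r t)) :
    ∑ t ∈ Finset.range T, max 0 (r t - h t) =
      (Finset.range (T + 1)).sup' (Finset.nonempty_range_iff.mpr (by omega))
        (fun n => ∑ i ∈ Finset.range n, r i) := by
  set S : ℕ → ℝ := fun n => ∑ i ∈ Finset.range n, r i with hS
  set M : ℕ → ℝ := fun T => (Finset.range (T + 1)).sup'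
      (Finset.nonempty_range_iff.mpr (by omega)) S with hM
  have hMsucc : ∀ n, M (n + 1) = max (M n) (S (n + 1)) := by
    intro n
    have : Finset.range (n + 2) = insert (n + 1) (Finset.range (n + 1)) := by
      rw [Finset.range_add_one]
    simp only [hM, this]
    rw [Finset.sup'_insert, max_comm]
  have key : ∀ n, (∑ t ∈ Finset.range n, max 0 (r t - h t) = M n) ∧ h n = M n - S n := by
    intro n
    induction n with
    | zero => simp [hM, hS, h0]
    | succ k ih =>
      obtain ⟨ih1, ih2⟩ := ih
      have hSk : S (k + 1) = S k + r k := by simp [hS, Finset.sum_range_succ]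
      constructor
      · rw [Finset.sum_range_succ, ih1, ih2, hMsucc, hSk]
        rcases le_total (S k + r k) (M k) with hle | hle
        · rw [max_eq_left hle, max_eq_left (by linarith), add_zero]
        · rw [max_eq_right hle, max_eq_right (by linarith)]; ring
      · rw [hrec, ih2, hMsucc, hSk]
        rcases le_total (S k + r k) (M k) with hle | hle
        · rw [max_eq_left hle, max_eq_right (by linarith)]; ring
        · rw [max_eq_right hle, max_eq_left (by linarith)]; ring
  exact (key T).1
end

section
/- Let M̃ be a finite non-cumulative Markov decision process with finite state, action, and reward spaces, objective function f, and transition kernel p̃. Let M be the corresponding MDP with states s_t = (s̃_t, h_t), adapted rewards r_t = ρ(h_t, r̃_t) satisfying r_t = f(r̃₀,...,r̃_t) − f(r̃₀,...,r̃_{t-1}), auxiliary update h_{t+1} = u(h_t, r̃_t), and transition kernel p(r_t, s_{t+1} | s_t, a_t) = ∑_{r̃_t} p̃(r̃_t, s̃_{t+1} | s̃_t, a_t)·[h_{t+1} = u(h_t, r̃_t)]·[r_t = ρ(h_t, r̃_t)]. Then for any policy π(a|s) of M, used in M̃ by computing h_t along the trajectory, the probability of a trajectory T of M equals the sum of probabilities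 of all trajectories T̃ of M̃ that map to T. -/
/-! Mapping an NCMDP to a corresponding MDP: the trajectory distribution of the
corresponding MDP is the pushforward of the NCMDP trajectory distribution under
the trajectory mapping (Equation (9) of the paper). Trajectories have fixed
horizon `T`; a trajectory records, for each step, the action taken, the reward
received, and the next state. `P` is the finite reward alphabet of the NCMDP
with values `val : P → ℝ`. -/

/-- State of the NCMDP at time `t` along a trajectory (`s0` is the fixed
initial state). -/
def ncState {S A P : Type} (T : ℕ) (s0 : S) (τ : Fin T → A × P × S) : ℕ → S
  | 0 => s0
  | t + 1 => if h : t < T then (τ ⟨t, h⟩).2.2 else s0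

/-- Auxiliary reward-history information `h_t`, updated by `u`. -/
def ncAux {S A P H : Type} (T : ℕ) (u : H → ℝ → H) (val : P → ℝ) (h0 : H)
    (τ : Fin T → A × P × S) : ℕ → H
  | 0 => h0
  | t + 1 => if h : t < T then u (ncAux T u val h0 τ t) (val (τ ⟨t, h⟩).2.1)
             else ncAux T u val h0 τ t

/-- Probability of an NCMDP trajectory when the policy `π` (a policy of the
corresponding MDP, acting on augmented states `(s̃_t, h_t)`) is used via the
trajectory mapping; `pt s a p s'` is `p̃(r̃ = p, s' | s, a)`. -/
def ncProb {S A P H : Type} (T : ℕ) (s0 : S) (h0 : H) (u : H → ℝ → H)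
    (val : P → ℝ) (π : S × H → A → ℝ) (pt : S → A → P → S → ℝ)
    (τ : Fin T → A × P × S) : ℝ :=
  ∏ t : Fin T,
    π (ncState T s0 τ t, ncAux T u val h0 τ t) (τ t).1 *
      pt (ncState T s0 τ t) (τ t).1 (τ t).2.1 (ncState T s0 τ (t + 1))

/-- Mapping of NCMDP trajectories to trajectories of the corresponding MDP:
actions are kept, rewards are replaced by the adapted rewards `ρ(h_t, r̃_t)`,
and states are augmented with `h_{t+1}`. -/
def mapTraj {S A P H : Type} (T : ℕ) (s0 : S) (h0 : H) (u : H → ℝ → H)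
    (ρ : H → ℝ → ℝ) (val : P → ℝ) (τ : Fin T → A × P × S) :
    Fin T → A × ℝ × (S × H) :=
  fun t => ((τ t).1, ρ (ncAux T u val h0 τ t) (val (τ t).2.1),
    ((τ t).2.2, ncAux (S := S) (A := A) T u val h0 τ (t + 1)))

/-- State of the corresponding MDP at time `t` along one of its trajectories. -/
def mState {S A H : Type} (T : ℕ) (s0 : S) (h0 : H)
    (τ : Fin T → A × ℝ × (S × H)) : ℕ → S × H
  | 0 => (s0, h0)
  | t + 1 => if h : t < T then (τ ⟨t, h⟩).2.2 else (s0, h0)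

/-- Transition kernel of the corresponding MDP,
`p(r, s' | s, a) = ∑_{r̃} p̃(r̃, s̃' | s̃, a)·[h' = u(h, r̃)]·[r = ρ(h, r̃)]`. -/
noncomputable def mKernel {S A P H : Type} [Fintype P] [DecidableEq H]
    (pt : S → A → P → S → ℝ) (u : H → ℝ → H) (ρ : H → ℝ → ℝ) (val : P → ℝ) :
    S × H → A → ℝ → S × H → ℝ :=
  fun s a r s' => ∑ p : P,
    pt s.1 a p s'.1 * (if s'.2 = u s.2 (val p) then 1 else 0)
      * (if r = ρ s.2 (val p) then 1 else 0)

/-- Probability of a trajectory of the corresponding MDP under policy `π`. -/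
noncomputable def mProb {S A P H : Type} [Fintype P] [DecidableEq H] (T : ℕ) (s0 : S) (h0 : H)
    (u : H → ℝ → H) (ρ : H → ℝ → ℝ) (val : P → ℝ) (π : S × H → A → ℝ)
    (pt : S → A → P → S → ℝ) (τ : Fin T → A × ℝ × (S × H)) : ℝ :=
  ∏ t : Fin T,
    π (mState T s0 h0 τ t) (τ t).1 *
      mKernel pt u ρ val (mState T s0 h0 τ t) (τ t).1 (τ t).2.1
        (mState T s0 h0 τ (t + 1))

namespace Eq9Aux

attribute [local instance] Classical.propDecidable

variable {S A P H : Type}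

/-- Embedding of reward sequences into NCMDP trajectories compatible with `τ'`. -/
def E (T : ℕ) (τ' : Fin T → A × ℝ × (S × H)) (g : Fin T → P) : Fin T → A × P × S :=
  fun t => ((τ' t).1, g t, (τ' t).2.2.1)

/-- Step factor of `mProb` after expanding `mKernel`, at reward choice `g`. -/
noncomputable def F (T : ℕ) (s0 : S) (h0 : H) (u : H → ℝ → H) (ρ : H → ℝ → ℝ)
    (val : P → ℝ) (π : S × H → A → ℝ) (pt : S → A → P → S → ℝ)
    (τ' : Fin T → A × ℝ × (S × H)) (g : Fin T → P) (n : ℕ) : ℝ :=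
  if h : n < T then
    π (mState T s0 h0 τ' n) (τ' ⟨n, h⟩).1 *
      (pt (mState T s0 h0 τ' n).1 (τ' ⟨n, h⟩).1 (g ⟨n, h⟩) (mState T s0 h0 τ' (n + 1)).1 *
        (if (mState T s0 h0 τ' (n + 1)).2 = u (mState T s0 h0 τ' n).2 (val (g ⟨n, h⟩)) then (1:ℝ) else 0) *
        (if (τ' ⟨n, h⟩).2.1 = ρ (mState T s0 h0 τ' n).2 (val (g ⟨n, h⟩)) then (1:ℝ) else 0))
  else 1

/-- Step factor of `ncProb` for the trajectory `E T τ' g`. -/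
noncomputable def G (T : ℕ) (s0 : S) (h0 : H) (u : H → ℝ → H)
    (val : P → ℝ) (π : S × H → A → ℝ) (pt : S → A → P → S → ℝ)
    (τ' : Fin T → A × ℝ × (S × H)) (g : Fin T → P) (n : ℕ) : ℝ :=
  if h : n < T then
    π (ncState T s0 (E T τ' g) n, ncAux T u val h0 (E T τ' g) n) (τ' ⟨n, h⟩).1 *
      pt (ncState T s0 (E T τ' g) n) (τ' ⟨n, h⟩).1 (g ⟨n, h⟩) (ncState T s0 (E T τ' g) (n + 1))
  else 1

/-- Consistency condition at step `n`. -/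
def C (T : ℕ) (s0 : S) (h0 : H) (u : H → ℝ → H) (ρ : H → ℝ → ℝ) (val : P → ℝ)
    (τ' : Fin T → A × ℝ × (S × H)) (g : Fin T → P) (n : ℕ) : Prop :=
  if h : n < T then
    ρ (ncAux T u val h0 (E T τ' g) n) (val (g ⟨n, h⟩)) = (τ' ⟨n, h⟩).2.1 ∧
      ncAux T u val h0 (E T τ' g) (n + 1) = (mState T s0 h0 τ' (n + 1)).2
  else True

lemma hst (T : ℕ) (s0 : S) (h0 : H) (τ' : Fin T → A × ℝ × (S × H)) (g : Fin T → P)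
    (t : ℕ) : ncState T s0 (E T τ' g) t = (mState T s0 h0 τ' t).1 := by
  cases t with
  | zero => rfl
  | succ n =>
    show (if h : n < T then (E T τ' g ⟨n, h⟩).2.2 else s0)
      = (if h : n < T then (τ' ⟨n, h⟩).2.2 else (s0, h0)).1
    split <;> rfl

lemma naux_succ (T : ℕ) (h0 : H) (u : H → ℝ → H) (val : P → ℝ)
    (τ' : Fin T → A × ℝ × (S × H)) (g : Fin T → P) (n : ℕ) (h : n < T) :
    ncAux T u val h0 (E T τ' g) (n + 1)
      = u (ncAux T u val h0 (E T τ' g) n) (val (g ⟨n, h⟩)) := by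
  show (if h : n < T then _ else _) = _
  rw [dif_pos h]
  rfl

lemma key (T : ℕ) (s0 : S) (h0 : H) (u : H → ℝ → H) (ρ : H → ℝ → ℝ) (val : P → ℝ)
    (τ' : Fin T → A × ℝ × (S × H)) (g : Fin T → P) (n : ℕ) (hn : n ≤ T)
    (hc : ∀ t < n, C T s0 h0 u ρ val τ' g t) :
    ncAux T u val h0 (E T τ' g) n = (mState T s0 h0 τ' n).2 := by
  cases n with
  | zero => rfl
  | succ m =>
    have hm : m < T := Nat.lt_of_succ_le hn
    have := hc m (Nat.lt_succ_self m)
    rw [C, dif_pos hm] at this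
    exact this.2

lemma main (T : ℕ) (s0 : S) (h0 : H) (u : H → ℝ → H) (ρ : H → ℝ → ℝ) (val : P → ℝ)
    (π : S × H → A → ℝ) (pt : S → A → P → S → ℝ)
    (τ' : Fin T → A × ℝ × (S × H)) (g : Fin T → P) :
    ∀ n, n ≤ T →
      ∏ t ∈ Finset.range n, F T s0 h0 u ρ val π pt τ' g t =
        if ∀ t < n, C T s0 h0 u ρ val τ' g t then
          ∏ t ∈ Finset.range n, G T s0 h0 u val π pt τ' g t
        else 0 := by
  intro n
  induction n with
  | zero =>
    intro _
    simp only [Finset.range_zero, Finset.prod_empty]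
    rw [if_pos]
    intro t ht
    exact absurd ht (Nat.not_lt_zero t)
  | succ n ih =>
    intro hle
    have hn : n < T := Nat.lt_of_succ_le hle
    rw [Finset.prod_range_succ, Finset.prod_range_succ, ih (le_of_lt hn)]
    by_cases hC : ∀ t < n, C T s0 h0 u ρ val τ' g t
    · rw [if_pos hC]
      have hA : ncAux T u val h0 (E T τ' g) n = (mState T s0 h0 τ' n).2 :=
        key T s0 h0 u ρ val τ' g n (le_of_lt hn) hC
      have hsucc := naux_succ T h0 u val τ' g n hn
      by_cases hcn : C T s0 h0 u ρ val τ' g n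
      · have hall : ∀ t < n + 1, C T s0 h0 u ρ val τ' g t := by
          intro t ht
          rcases Nat.lt_succ_iff_lt_or_eq.mp ht with h | h
          · exact hC t h
          · exact h ▸ hcn
        rw [if_pos hall]
        congr 1
        rw [C, dif_pos hn] at hcn
        obtain ⟨h1, h2⟩ := hcn
        rw [F, G, dif_pos hn, dif_pos hn, hst T s0 h0 τ' g n, hst T s0 h0 τ' g (n + 1),
          hA, Prod.mk.eta,
          if_pos (by rw [← h2, hsucc, hA]),
          if_pos (by rw [← hA, h1]),
          mul_one, mul_one]
      · have hnall : ¬ ∀ t < n + 1, C T s0 h0 u ρ val τ' g t :=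
          fun h => hcn (h n (Nat.lt_succ_self n))
        rw [if_neg hnall]
        suffices h : F T s0 h0 u ρ val π pt τ' g n = 0 by rw [h, mul_zero]
        rw [C, dif_pos hn] at hcn
        rw [F, dif_pos hn]
        by_cases h1 : ρ (ncAux T u val h0 (E T τ' g) n) (val (g ⟨n, hn⟩)) = (τ' ⟨n, hn⟩).2.1
        · have h2 : ncAux T u val h0 (E T τ' g) (n + 1) ≠ (mState T s0 h0 τ' (n + 1)).2 :=
            fun h => hcn ⟨h1, h⟩
          rw [if_neg (fun h => h2 (by rw [hsucc, hA, ← h])), mul_zero, zero_mul, mul_zero]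
        · have hne : ¬ (τ' ⟨n, hn⟩).2.1 = ρ (mState T s0 h0 τ' n).2 (val (g ⟨n, hn⟩)) :=
            fun h => h1 (by rw [hA]; exact h.symm)
          rw [if_neg hne, mul_zero, mul_zero]
    · rw [if_neg hC, zero_mul,
        if_neg (fun h => hC fun t ht => h t (Nat.lt_trans ht (Nat.lt_succ_self n)))]

end Eq9Aux


/-- Equation (9): the probability of a trajectory of the corresponding MDP
equals the sum of the probabilities of all NCMDP trajectories mapping to it. -/
theorem mdp_prob_eq_pushforward {S A P H : Type}
    [Fintype S] [Fintype A] [Fintype P] [Fintype H]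
    [DecidableEq S] [DecidableEq A] [DecidableEq H]
    (T : ℕ) (s0 : S) (h0 : H) (val : P → ℝ) (u : H → ℝ → H) (ρ : H → ℝ → ℝ)
    (π : S × H → A → ℝ) (pt : S → A → P → S → ℝ)
    (hπ0 : ∀ s a, 0 ≤ π s a) (hπ1 : ∀ s, ∑ a : A, π s a = 1)
    (hpt0 : ∀ s a p s', 0 ≤ pt s a p s')
    (hpt1 : ∀ s a, ∑ p : P, ∑ s' : S, pt s a p s' = 1) :
        ∀ τ' : Fin T → A × ℝ × (S × H),
      mProb T s0 h0 u ρ val π pt τ' =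
        ∑ τ : Fin T → A × P × S,
          if mapTraj T s0 h0 u ρ val τ = τ' then ncProb T s0 h0 u val π pt τ
          else 0 := by
  classical
  intro τ'
  -- Step 1: expand `mProb` as a sum over reward sequences of products of `F`.
  have hL : mProb T s0 h0 u ρ val π pt τ' =
      ∑ g : Fin T → P, ∏ t ∈ Finset.range T, Eq9Aux.F T s0 h0 u ρ val π pt τ' g t := by
    rw [mProb]
    have hfac : ∀ t : Fin T,
        π (mState T s0 h0 τ' t) (τ' t).1 *
          mKernel pt u ρ val (mState T s0 h0 τ' t) (τ' t).1 (τ' t).2.1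
            (mState T s0 h0 τ' (t + 1))
        = ∑ p : P, π (mState T s0 h0 τ' t) (τ' t).1 *
            (pt (mState T s0 h0 τ' t).1 (τ' t).1 p (mState T s0 h0 τ' (t + 1)).1 *
              (if (mState T s0 h0 τ' (t + 1)).2 = u (mState T s0 h0 τ' t).2 (val p)
                then (1:ℝ) else 0) *
              (if (τ' t).2.1 = ρ (mState T s0 h0 τ' t).2 (val p) then (1:ℝ) else 0)) := by
      intro t; rw [mKernel, Finset.mul_sum]
    rw [Finset.prod_congr rfl (fun t _ => hfac t), Finset.prod_univ_sum]
    rw [Fintype.piFinset_univ]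
    refine Finset.sum_congr rfl fun g _ => ?_
    rw [← Fin.prod_univ_eq_prod_range]
    refine Finset.prod_congr rfl fun t _ => ?_
    rw [Eq9Aux.F, dif_pos t.isLt]
    simp only [Fin.eta]
    congr
  -- Step 2: restrict the sum over NCMDP trajectories to those in the image of `E`.
  have hR : (∑ τ : Fin T → A × P × S,
        if mapTraj T s0 h0 u ρ val τ = τ' then ncProb T s0 h0 u val π pt τ else 0)
      = ∑ g : Fin T → P,
          (if mapTraj T s0 h0 u ρ val (Eq9Aux.E T τ' g) = τ' then
            ncProb T s0 h0 u val π pt (Eq9Aux.E T τ' g) else 0) := by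
    have hinj : ∀ x ∈ (Finset.univ : Finset (Fin T → P)), ∀ y ∈ Finset.univ,
        Eq9Aux.E T τ' x = Eq9Aux.E T τ' y → x = y := by
      intro x _ y _ hxy
      funext t
      exact congrArg (fun f => (f t).2.1) hxy
    rw [← Finset.sum_image
      (f := fun τ => if mapTraj T s0 h0 u ρ val τ = τ' then ncProb T s0 h0 u val π pt τ else 0)
      hinj]
    refine (Finset.sum_subset (Finset.subset_univ _) ?_).symm
    intro τ _ hτ
    rw [if_neg]
    intro hmap
    apply hτ
    refine Finset.mem_image.mpr ⟨fun t => (τ t).2.1, Finset.mem_univ _, ?_⟩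
    funext t
    have h1 := congrFun hmap t
    have ha : (τ t).1 = (τ' t).1 := congrArg Prod.fst h1
    have hs : (τ t).2.2 = (τ' t).2.2.1 := congrArg (fun x => x.2.1) (congrArg Prod.snd h1)
    show ((τ' t).1, (τ t).2.1, (τ' t).2.2.1) = τ t
    rw [← ha, ← hs]
  -- Step 3: the per-`g` identity.
  have hg : ∀ g : Fin T → P,
      (if ∀ t < T, Eq9Aux.C T s0 h0 u ρ val τ' g t then
        ∏ t ∈ Finset.range T, Eq9Aux.G T s0 h0 u val π pt τ' g t else 0)
      = (if mapTraj T s0 h0 u ρ val (Eq9Aux.E T τ' g) = τ' then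
          ncProb T s0 h0 u val π pt (Eq9Aux.E T τ' g) else 0) := by
    intro g
    have hiff : (∀ t < T, Eq9Aux.C T s0 h0 u ρ val τ' g t) ↔
        mapTraj T s0 h0 u ρ val (Eq9Aux.E T τ' g) = τ' := by
      constructor
      · intro h
        funext t
        have hc := h ↑t t.isLt
        rw [Eq9Aux.C, dif_pos t.isLt] at hc
        obtain ⟨h1, h2⟩ := hc
        have hm2 : (mState T s0 h0 τ' (↑t + 1)).2 = (τ' t).2.2.2 := by
          show (if h : (t : ℕ) < T then (τ' ⟨t, h⟩).2.2 else (s0, h0)).2 = _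
          rw [dif_pos t.isLt]
        show ((τ' t).1, ρ (ncAux T u val h0 (Eq9Aux.E T τ' g) ↑t) (val (g t)),
          ((τ' t).2.2.1, ncAux T u val h0 (Eq9Aux.E T τ' g) (↑t + 1))) = τ' t
        rw [h1, h2, hm2]
      · intro hmap t ht
        rw [Eq9Aux.C, dif_pos ht]
        have h1 := congrFun hmap ⟨t, ht⟩
        refine ⟨congrArg (fun x => x.2.1) h1, ?_⟩
        have h2 : ncAux T u val h0 (Eq9Aux.E T τ' g) (t + 1) = (τ' ⟨t, ht⟩).2.2.2 :=
          congrArg (fun x => x.2.2.2) h1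
        have hm2 : (mState T s0 h0 τ' (t + 1)).2 = (τ' ⟨t, ht⟩).2.2.2 := by
          show (if h : t < T then (τ' ⟨t, h⟩).2.2 else (s0, h0)).2 = _
          rw [dif_pos ht]
        rw [h2, hm2]
    have hprod : ∏ t ∈ Finset.range T, Eq9Aux.G T s0 h0 u val π pt τ' g t
        = ncProb T s0 h0 u val π pt (Eq9Aux.E T τ' g) := by
      rw [ncProb, ← Fin.prod_univ_eq_prod_range]
      refine Finset.prod_congr rfl fun t _ => ?_
      rw [Eq9Aux.G, dif_pos t.isLt]
      simp only [Fin.eta]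
      rfl
    by_cases hc : ∀ t < T, Eq9Aux.C T s0 h0 u ρ val τ' g t
    · rw [if_pos hc, if_pos (hiff.mp hc), hprod]
    · rw [if_neg hc, if_neg (fun h => hc (hiff.mpr h))]
  rw [hL, hR]
  refine Finset.sum_congr rfl fun g _ => ?_
  rw [Eq9Aux.main T s0 h0 u ρ val π pt τ' g T le_rfl, hg g]
end
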